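/- Let V and W be finite-dimensional real vector spaces equipped with nondegenerate symmetric bilinear forms g_V and g_W, let k be a natural number, and for each ℓ ∈ {0,…,k} let A_ℓ be a multilinear map V^{ℓ+4} → ℝ, B_ℓ a multilinear map W^{ℓ+4} → ℝ, R_ℓ a multilinear map V^{ℓ+2} → End(V), and S_ℓ a multilinear map W^{ℓ+2} → End(W), satisfying the compatibility identities g_V(R_ℓ(x₁,x₂,x₅,…,x_{ℓ+4})x₃, x₄) = A_ℓ(x₁,x₂,x₃,x₄,x₅,…,x_{ℓ+4}) for all x_i ∈ V and g_W(S_ℓ(y₁,y₂,y₅,…,y_{ℓ+4})y₃, y₄) = B_ℓ(y₁,y₂,y₃,y₄,y₅,…,y_{ℓ+4}) for all y_i ∈ W. Then the following are equivalent: (1) there exist λ > 0 and a linear bijection φ : V → W such that g_W(φx, φy) = λ²·g_V(x,y) for all x,y ∈ V and φ(R_ℓ(x₁,x₂,x₅,…,x_{ℓ+4})x₃) = S_ℓ(φx₁,φx₂,φx₅,…,φx_{ℓ+4})(φx₃) for all 0 ≤ ℓ ≤ k and all x_i ∈ V; (2) there exist a real number μ ≠ 0 and a linear bijection Φ : V →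 W such that g_W(Φx, Φy) = g_V(x,y) for all x,y ∈ V and B_ℓ(Φx₁,…,Φx_{ℓ+4}) = μ^{−ℓ−2}·A_ℓ(x₁,…,x_{ℓ+4}) for all 0 ≤ ℓ ≤ k and all x_i ∈ V. -/

import Mathlib

/-- Given a tuple `x` of `ℓ+4` vectors, select the `ℓ+2` vectors
`x₁, x₂, x₅, …, x_{ℓ+4}` (in 0-based indexing: entries `0, 1, 4, 5, …, ℓ+3`). -/
def curvSel {V : Type*} {ℓ : ℕ} (x : Fin (ℓ + 4) → V) (i : Fin (ℓ + 2)) : V :=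
  if h : (i : ℕ) < 2 then x ⟨(i : ℕ), by omega⟩
  else x ⟨(i : ℕ) + 2, by have := i.isLt; omega⟩

/-- Assemble a tuple of `ℓ+4` vectors from `ℓ+2` vectors plus two extra ones in slots 2, 3. -/
def curvAsm {V : Type*} {ℓ : ℕ} (y : Fin (ℓ + 2) → V) (a b : V) (i : Fin (ℓ + 4)) : V :=
  if h : (i : ℕ) < 2 then y ⟨(i : ℕ), by omega⟩
  else if (i : ℕ) = 2 then a
  else if (i : ℕ) = 3 then b
  else y ⟨(i : ℕ) - 2, by have := i.isLt; omega⟩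

lemma fin_val_two {n : ℕ} : ((2 : Fin (n + 4)) : ℕ) = 2 := by
  have : ((2 : Fin (n + 4)) : ℕ) = 2 % (n + 4) := rfl
  rw [this, Nat.mod_eq_of_lt (by omega)]

lemma fin_val_three {n : ℕ} : ((3 : Fin (n + 4)) : ℕ) = 3 := by
  have : ((3 : Fin (n + 4)) : ℕ) = 3 % (n + 4) := rfl
  rw [this, Nat.mod_eq_of_lt (by omega)]

lemma curvSel_asm {V : Type*} {ℓ : ℕ} (y : Fin (ℓ + 2) → V) (a b : V) :
    curvSel (curvAsm y a b) = y := by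
  funext i
  unfold curvSel curvAsm
  by_cases h : (i : ℕ) < 2
  · simp only [h, dif_pos]
  · have hi := i.isLt
    rw [dif_neg h, dif_neg (by omega : ¬ ((i : ℕ) + 2 < 2)),
      if_neg (by omega : ¬ ((i : ℕ) + 2 = 2)), if_neg (by omega : ¬ ((i : ℕ) + 2 = 3))]
    exact congrArg y (Fin.ext (by simp))

lemma curvAsm_two {V : Type*} {ℓ : ℕ} (y : Fin (ℓ + 2) → V) (a b : V) :
    curvAsm y a b 2 = a := by
  unfold curvAsm
  rw [dif_neg (by rw [fin_val_two]; omega), if_pos fin_val_two]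

lemma curvAsm_three {V : Type*} {ℓ : ℕ} (y : Fin (ℓ + 2) → V) (a b : V) :
    curvAsm y a b 3 = b := by
  unfold curvAsm
  rw [dif_neg (by rw [fin_val_three]; omega), if_neg (by rw [fin_val_three]; omega),
    if_pos fin_val_three]

lemma curvSel_comp {V W : Type*} {ℓ : ℕ} (f : V → W) (x : Fin (ℓ + 4) → V) :
    curvSel (fun i => f (x i)) = fun i => f (curvSel x i) := by
  funext i
  unfold curvSel
  split <;> rfl

lemma zpow_key {μ : ℝ} (hμ : μ ≠ 0) (n : ℕ) :
    μ ^ (n + 4) * μ ^ (-(n : ℤ) - 2) = μ ^ 2 := by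
  rw [← zpow_natCast μ (n + 4), ← zpow_add₀ hμ]
  rw [show ((n + 4 : ℕ) : ℤ) + (-(n : ℤ) - 2) = ((2 : ℕ) : ℤ) by push_cast; ring, zpow_natCast]

theorem stmt0 {V W : Type*} [AddCommGroup V] [Module ℝ V] [FiniteDimensional ℝ V]
    [AddCommGroup W] [Module ℝ W] [FiniteDimensional ℝ W]
    (gV : V →ₗ[ℝ] V →ₗ[ℝ] ℝ) (gW : W →ₗ[ℝ] W →ₗ[ℝ] ℝ)
    (hgVsymm : ∀ x y, gV x y = gV y x)
    (hgVnd : ∀ x, (∀ y, gV x y = 0) → x = 0)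
    (hgWsymm : ∀ x y, gW x y = gW y x)
    (hgWnd : ∀ x, (∀ y, gW x y = 0) → x = 0)
    (k : ℕ)
    (A : (ℓ : Fin (k + 1)) → MultilinearMap ℝ (fun _ : Fin ((ℓ : ℕ) + 4) => V) ℝ)
    (B : (ℓ : Fin (k + 1)) → MultilinearMap ℝ (fun _ : Fin ((ℓ : ℕ) + 4) => W) ℝ)
    (R : (ℓ : Fin (k + 1)) → MultilinearMap ℝ (fun _ : Fin ((ℓ : ℕ) + 2) => V) (V →ₗ[ℝ] V))
    (S : (ℓ : Fin (k + 1)) → MultilinearMap ℝ (fun _ : Fin ((ℓ : ℕ) + 2) => W) (W →ₗ[ℝ] W))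
    (hAR : ∀ (ℓ : Fin (k + 1)) (x : Fin ((ℓ : ℕ) + 4) → V),
      gV (R ℓ (curvSel x) (x 2)) (x 3) = A ℓ x)
    (hBS : ∀ (ℓ : Fin (k + 1)) (y : Fin ((ℓ : ℕ) + 4) → W),
      gW (S ℓ (curvSel y) (y 2)) (y 3) = B ℓ y) :
    (∃ lam : ℝ, 0 < lam ∧ ∃ φ : V ≃ₗ[ℝ] W,
      (∀ x y, gW (φ x) (φ y) = lam ^ 2 * gV x y) ∧
      (∀ (ℓ : Fin (k + 1)) (y : Fin ((ℓ : ℕ) + 2) → V) (x₃ : V),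
        φ (R ℓ y x₃) = S ℓ (fun i => φ (y i)) (φ x₃))) ↔
    (∃ μ : ℝ, μ ≠ 0 ∧ ∃ Φ : V ≃ₗ[ℝ] W,
      (∀ x y, gW (Φ x) (Φ y) = gV x y) ∧
      (∀ (ℓ : Fin (k + 1)) (x : Fin ((ℓ : ℕ) + 4) → V),
        B ℓ (fun i => Φ (x i)) = μ ^ (-((ℓ : ℕ) : ℤ) - 2) * A ℓ x)) := by
  constructor
  · rintro ⟨lam, hlam, φ, hiso, hcurv⟩
    have hlam' : lam ≠ 0 := ne_of_gt hlam
    refine ⟨lam, hlam', φ.trans (LinearEquiv.smulOfNeZero ℝ W lam⁻¹ (inv_ne_zero hlam')), ?_, ?_⟩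
    · intro x y
      simp only [LinearEquiv.trans_apply, LinearEquiv.smulOfNeZero_apply, Units.smul_mk0,
        map_smul, LinearMap.smul_apply, smul_eq_mul, hiso]
      field_simp
    · intro ℓ x
      simp only [LinearEquiv.trans_apply, LinearEquiv.smulOfNeZero_apply, Units.smul_mk0]
      have hsm : (B ℓ) (fun i => lam⁻¹ • φ (x i)) =
          (∏ _i : Fin ((ℓ : ℕ) + 4), lam⁻¹) • B ℓ (fun i => φ (x i)) :=
        MultilinearMap.map_smul_univ (B ℓ) (fun _ => lam⁻¹) (fun i => φ (x i))
      rw [hsm, ← hBS ℓ (fun i => φ (x i)), curvSel_comp, ← hcurv, hiso, hAR]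
      simp only [Finset.prod_const, Finset.card_univ, Fintype.card_fin, smul_eq_mul]
      rw [← zpow_key hlam' (ℓ : ℕ)]
      field_simp
      have h4 : lam ^ 4 * lam⁻¹ ^ 4 = 1 := by rw [← mul_pow, mul_inv_cancel₀ hlam', one_pow]
      have hl : lam ^ (ℓ : ℕ) * lam⁻¹ ^ (ℓ : ℕ) = 1 := by
        rw [← mul_pow, mul_inv_cancel₀ hlam', one_pow]
      linear_combination (lam ^ (ℓ : ℕ) * lam⁻¹ ^ (ℓ : ℕ) * A ℓ x) * h4 + A ℓ x * hl
  · rintro ⟨μ, hμ, Φ, hiso, hB⟩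
    refine ⟨|μ|, abs_pos.2 hμ, Φ.trans (LinearEquiv.smulOfNeZero ℝ W μ hμ), ?_, ?_⟩
    · intro x y
      simp only [LinearEquiv.trans_apply, LinearEquiv.smulOfNeZero_apply, Units.smul_mk0,
        map_smul, LinearMap.smul_apply, smul_eq_mul, hiso, sq_abs]
      ring
    · intro ℓ y x₃
      set φ := Φ.trans (LinearEquiv.smulOfNeZero ℝ W μ hμ) with hφ
      have key : ∀ x₄ : V,
          gW (φ (R ℓ y x₃)) (φ x₄) = gW (S ℓ (fun i => φ (y i)) (φ x₃)) (φ x₄) := by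
        intro x₄
        set x : Fin ((ℓ : ℕ) + 4) → V := curvAsm y x₃ x₄ with hx
        have h1 : curvSel x = y := curvSel_asm y x₃ x₄
        have h2 : x 2 = x₃ := curvAsm_two y x₃ x₄
        have h3 : x 3 = x₄ := curvAsm_three y x₃ x₄
        have lhs : gW (φ (R ℓ y x₃)) (φ x₄) = μ ^ 2 * A ℓ x := by
          simp only [hφ, LinearEquiv.trans_apply, LinearEquiv.smulOfNeZero_apply,
            Units.smul_mk0, map_smul, LinearMap.smul_apply, smul_eq_mul, hiso]
          rw [← h1, ← h2, ← h3, hAR]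
          ring
        have rhs : gW (S ℓ (fun i => φ (y i)) (φ x₃)) (φ x₄) = μ ^ 2 * A ℓ x := by
          simp only [hφ, LinearEquiv.trans_apply, LinearEquiv.smulOfNeZero_apply,
            Units.smul_mk0]
          have hsm : (S ℓ) (fun i => μ • Φ (y i)) =
              (∏ _i : Fin ((ℓ : ℕ) + 2), μ) • S ℓ (fun i => Φ (y i)) :=
            MultilinearMap.map_smul_univ (S ℓ) (fun _ => μ) (fun i => Φ (y i))
          rw [hsm]
          simp only [Finset.prod_const, Finset.card_univ, Fintype.card_fin,
            LinearMap.smul_apply, map_smul, smul_eq_mul]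
          have hb := hBS ℓ (fun i => Φ (x i))
          rw [curvSel_comp, h1, h2, h3] at hb
          rw [hb, hB ℓ x]
          have hd : μ ^ (-((ℓ : ℕ) : ℤ) - 2) = μ ^ 2 / μ ^ ((ℓ : ℕ) + 4) := by
            rw [eq_div_iff (pow_ne_zero _ hμ), mul_comm]
            exact zpow_key hμ _
          rw [hd]
          field_simp
          ring
        rw [lhs, rhs]
      have hz : φ (R ℓ y x₃) - S ℓ (fun i => φ (y i)) (φ x₃) = 0 := by
        apply hgWnd
        intro w
        have hw := key (φ.symm w)
        rw [LinearEquiv.apply_symm_apply] at hw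
        simp [map_sub, hw]
      exact sub_eq_zero.mp hz
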